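/- Let T be a pruned tree on a non-empty countable set A and let X be the set of infinite branches of T with its cylinder-set topology. Let f : X → ℝ be arbitrary and suppose that there is a number r ∈ ℝ and a Cantor set C ⊆ X such that, in the subspace topology of C, the set C ∩ {x ∈ X : f(x) ≥ r} is meagre in C and dense in C. Then Player I has a winning strategy in the game Γ(f). -/

import Mathlib

open Filter Topology

/-- The initial segment `(x₀, …, x_{n-1})` of an infinite sequence `x`. -/
def initSeg {β : Type*} (x : ℕ → β) (n : ℕ) : List β :=
  List.ofFn fun i : Fin n => x i

/-- `T` is a pruned tree on `A`: it contains the empty sequence, is closed under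
prefixes, and every element has a proper extension in `T`. -/
def IsPrunedTree {A : Type*} (T : Set (List A)) : Prop :=
  [] ∈ T ∧ (∀ s ∈ T, ∀ t : List A, t <+: s → t ∈ T) ∧ ∀ s ∈ T, ∃ a : A, s ++ [a] ∈ T

/-- The space `X` of infinite branches of the tree `T`, topologized as a subspace of
the product `ℕ → A` (with `A` discrete); this is exactly the cylinder-set topology. -/
abbrev Branches {A : Type*} (T : Set (List A)) : Type _ :=
  {x : ℕ → A // ∀ n : ℕ, initSeg x n ∈ T}

/-- The cylinder set `O(s)` of all branches with initial segment `s`. -/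
def cyl {A : Type*} (T : Set (List A)) (s : List A) : Set (Branches T) :=
  {x | initSeg x.val s.length = s}

/-- `f : X → ℝ` is a limsup function: there is `u` defined on finite sequences with
`f x = limsup_{t → ∞} u (x₀, …, x_t)` for every branch `x` (the limsup being computed
in the extended reals and required to equal the real number `f x`). -/
def IsLimsupFunction {A : Type*} {T : Set (List A)} (f : Branches T → ℝ) : Prop :=
  ∃ u : List A → ℝ, ∀ x : Branches T,
    (f x : EReal) = Filter.limsup (fun t : ℕ => (u (initSeg x.val (t + 1)) : EReal)) Filter.atTop

/-- `f` is of Baire class 1: a pointwise limit of continuous functions. -/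
def BaireClassOne {X : Type*} [TopologicalSpace X] (f : X → ℝ) : Prop :=
  ∃ g : ℕ → X → ℝ, (∀ n, Continuous (g n)) ∧
    ∀ x, Filter.Tendsto (fun n => g n x) Filter.atTop (nhds (f x))

/-- A Cantor set: a subset homeomorphic to the Cantor space `2^ℕ`. -/
def IsCantorSet {X : Type*} [TopologicalSpace X] (C : Set X) : Prop :=
  Nonempty (C ≃ₜ (ℕ → Bool))

/-- A Bernstein set: neither it nor its complement contains a nonempty perfect set. -/
def IsBernsteinSet {X : Type*} [TopologicalSpace X] (B : Set X) : Prop :=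
  ∀ P : Set X, Perfect P → P.Nonempty → ¬ P ⊆ B ∧ ¬ P ⊆ Bᶜ

/-- A co-analytic set: the complement of an analytic set. -/
def IsCoanalytic {X : Type*} [TopologicalSpace X] (s : Set X) : Prop :=
  MeasureTheory.AnalyticSet sᶜ

/-- The sequence of moves produced by Player I's strategy `σ` against the sequence `v`
of moves of Player II: Player I's `n`-th move depends on `(v₀, …, v_{n-1})`. -/
def playI {A M : Type*} (σ : List M → A) (v : ℕ → M) : ℕ → A :=
  fun n => σ (initSeg v n)

/-- Player II has a winning strategy in the game `Γ(f)`: a strategy for Player II assigns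
to each position `(x₀, …, x_t)` of moves of Player I a real number `v_t` (Player II's own
previous moves being determined), and it is winning if for every run, i.e. every branch
`x` that Player I may produce, `f x = limsup_{t → ∞} v_t`. -/
def PlayerIIWinsGamma {A : Type*} {T : Set (List A)} (f : Branches T → ℝ) : Prop :=
  ∃ τ : List A → ℝ, ∀ x : Branches T,
    (f x : EReal) = Filter.limsup (fun t : ℕ => (τ (initSeg x.val (t + 1)) : EReal)) Filter.atTop

/-- Player I has a winning strategy in the game `Γ_R(f)` where Player II's moves are
restricted to `R`: a strategy for Player I assigns to each position `(v₀, …, v_{n-1})` of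
moves of Player II a point of `A`, and it is winning if against every sequence of moves
of Player II in `R` the moves of Player I are legal (all initial segments lie in `T`) and
the resulting branch `x` satisfies `f x ≠ limsup_{t → ∞} v_t`. -/
def PlayerIWinsGammaR {A : Type*} {T : Set (List A)} (R : Set ℝ) (f : Branches T → ℝ) :
    Prop :=
  ∃ σ : List ℝ → A, ∀ v : ℕ → ℝ, (∀ t, v t ∈ R) →
    ∃ h : ∀ n : ℕ, initSeg (playI σ v) n ∈ T,
      (f ⟨playI σ v, h⟩ : EReal) ≠ Filter.limsup (fun t : ℕ => (v t : EReal)) Filter.atTop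

/-- Player I has a winning strategy in the game `Γ(f)`. -/
def PlayerIWinsGamma {A : Type*} {T : Set (List A)} (f : Branches T → ℝ) : Prop :=
  ∃ σ : List ℝ → A, ∀ v : ℕ → ℝ,
    ∃ h : ∀ n : ℕ, initSeg (playI σ v) n ∈ T,
      (f ⟨playI σ v, h⟩ : EReal) ≠ Filter.limsup (fun t : ℕ => (v t : EReal)) Filter.atTop

/-- Player II has a winning strategy in the game `Γ'(f)`, in which Player II's moves are
pairs `(v_t, w_t)` of reals and Player II wins a run iff
`f x = limsup_{t → ∞} v_t = liminf_{t → ∞} w_t`. -/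
def PlayerIIWinsGamma' {A : Type*} {T : Set (List A)} (f : Branches T → ℝ) : Prop :=
  ∃ τ : List A → ℝ × ℝ, ∀ x : Branches T,
    (f x : EReal) =
      Filter.limsup (fun t : ℕ => ((τ (initSeg x.val (t + 1))).1 : EReal)) Filter.atTop ∧
    (f x : EReal) =
      Filter.liminf (fun t : ℕ => ((τ (initSeg x.val (t + 1))).2 : EReal)) Filter.atTop

/-- Player I has a winning strategy in the game `Γ'(f)`. -/
def PlayerIWinsGamma' {A : Type*} {T : Set (List A)} (f : Branches T → ℝ) : Prop :=
  ∃ σ : List (ℝ × ℝ) → A, ∀ v : ℕ → ℝ × ℝ,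
    ∃ h : ∀ n : ℕ, initSeg (playI σ v) n ∈ T,
      ¬ ((f ⟨playI σ v, h⟩ : EReal) =
            Filter.limsup (fun t : ℕ => ((v t).1 : EReal)) Filter.atTop ∧
         (f ⟨playI σ v, h⟩ : EReal) =
            Filter.liminf (fun t : ℕ => ((v t).2 : EReal)) Filter.atTop)

section PlayerIAux

lemma initSeg_length {β : Type*} (x : ℕ → β) (n : ℕ) : (initSeg x n).length = n := by
  simp [initSeg]

lemma initSeg_eq_iff {β : Type*} {p q : ℕ → β} {m : ℕ} :
    initSeg p m = initSeg q m ↔ ∀ i < m, p i = q i := by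
  simp only [initSeg, List.ofFn_inj, funext_iff]
  exact ⟨fun h i hi => h ⟨i, hi⟩, fun h i => h i i.isLt⟩

lemma initSeg_agree_mono {β : Type*} {p q : ℕ → β} {m n : ℕ} (hmn : m ≤ n)
    (h : initSeg p n = initSeg q n) : initSeg p m = initSeg q m := by
  rw [initSeg_eq_iff] at h ⊢
  exact fun i hi => h i (lt_of_lt_of_le hi hmn)

lemma initSeg_succ {β : Type*} (x : ℕ → β) (n : ℕ) :
    initSeg x (n + 1) = initSeg x n ++ [x n] := by
  rw [initSeg, List.ofFn_succ']
  simp [initSeg, List.concat_eq_append]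

lemma initSeg_zero {β : Type*} (x : ℕ → β) : initSeg x 0 = [] := by
  simp [initSeg]

variable {A : Type*} {T : Set (List A)}

lemma nhds_cylinder [TopologicalSpace A] [DiscreteTopology A]
    {V : Set (Branches T)} (hV : IsOpen V) {x : Branches T} (hx : x ∈ V) :
    ∃ m, ∀ z : Branches T, initSeg z.val m = initSeg x.val m → z ∈ V := by
  obtain ⟨W, hW, rfl⟩ := isOpen_induced_iff.mp hV
  obtain ⟨I, u, hu, hsub⟩ := isOpen_pi_iff.mp hW x.val hx
  refine ⟨(I.sup id) + 1, fun z hz => ?_⟩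
  apply hsub
  intro i hi
  have hi' : i < I.sup id + 1 := Nat.lt_succ_of_le (Finset.le_sup (f := id) hi)
  have : z.val i = x.val i := initSeg_eq_iff.mp hz i hi'
  rw [this]; exact (hu i hi).2

lemma isOpen_initSegEq [TopologicalSpace A] [DiscreteTopology A]
    (y : ℕ → A) (m : ℕ) : IsOpen {z : Branches T | initSeg z.val m = initSeg y m} := by
  have h : {z : Branches T | initSeg z.val m = initSeg y m}
      = ⋂ i : Fin m, {z : Branches T | z.val i = y i} := by
    ext z
    simp only [Set.mem_setOf_eq, Set.mem_iInter, initSeg_eq_iff]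
    exact ⟨fun h i => h i i.isLt, fun h i hi => h ⟨i, hi⟩⟩
  rw [h]
  refine isOpen_iInter_of_finite fun i => ?_
  have hc : Continuous fun z : Branches T => z.val (i : ℕ) :=
    (continuous_apply (i : ℕ)).comp continuous_subtype_val
  exact hc.isOpen_preimage {y (i : ℕ)} (isOpen_discrete _)

variable (C : Set (Branches T)) (G : ℕ → Set (Branches T)) (f : Branches T → ℝ) (r : ℝ)
  (pA : ℕ → Branches T → ℕ → Branches T) (pD : Branches T → ℕ → Branches T)

open Classical in
noncomputable def auxStep (t : ℕ) (v : ℝ) (S : Branches T × ℕ × Bool) :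
    Branches T × ℕ × Bool :=
  if S.2.2 = true then
    if ∀ z : Branches T, z ∈ C → initSeg z.val (t+1) = initSeg S.1.val (t+1) → z ∉ G S.2.1
      then (S.1, S.2.1 + 1, false) else S
  else if r - 1/((S.2.1 : ℝ)+1) < v then (pA S.2.1 S.1 (t+1), S.2.1, true)
  else if r ≤ f S.1 then S
  else (pD S.1 (t+1), S.2.1, false)

lemma auxStep_spec (t : ℕ) (v : ℝ) (S : Branches T × ℕ × Bool) :
    (S.2.2 = true ∧
      (∀ z : Branches T, z ∈ C → initSeg z.val (t+1) = initSeg S.1.val (t+1) → z ∉ G S.2.1) ∧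
      auxStep C G f r pA pD t v S = (S.1, S.2.1 + 1, false)) ∨
    (S.2.2 = true ∧
      ¬ (∀ z : Branches T, z ∈ C → initSeg z.val (t+1) = initSeg S.1.val (t+1) → z ∉ G S.2.1) ∧
      auxStep C G f r pA pD t v S = S) ∨
    (S.2.2 = false ∧ r - 1/((S.2.1 : ℝ)+1) < v ∧
      auxStep C G f r pA pD t v S = (pA S.2.1 S.1 (t+1), S.2.1, true)) ∨
    (S.2.2 = false ∧ ¬ (r - 1/((S.2.1 : ℝ)+1) < v) ∧ r ≤ f S.1 ∧
      auxStep C G f r pA pD t v S = S) ∨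
    (S.2.2 = false ∧ ¬ (r - 1/((S.2.1 : ℝ)+1) < v) ∧ ¬ r ≤ f S.1 ∧
      auxStep C G f r pA pD t v S = (pD S.1 (t+1), S.2.1, false)) := by
  unfold auxStep
  rcases Bool.eq_false_or_eq_true S.2.2 with hb | hb <;> split_ifs with h1 h2 h3 <;> simp_all

noncomputable def auxState (y0 : Branches T) (l : List ℝ) : Branches T × ℕ × Bool :=
  (l.foldl (fun p v => (auxStep C G f r pA pD p.2 v p.1, p.2 + 1)) ((y0, 0, false), 0)).1

lemma auxState_nil (y0 : Branches T) (v : ℕ → ℝ) :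
    auxState C G f r pA pD y0 (initSeg v 0) = (y0, 0, false) := by
  rw [initSeg_zero]; rfl

lemma auxState_succ (y0 : Branches T) (v : ℕ → ℝ) (t : ℕ) :
    auxState C G f r pA pD y0 (initSeg v (t+1)) =
      auxStep C G f r pA pD t (v t) (auxState C G f r pA pD y0 (initSeg v t)) := by
  have key : ∀ (l : List ℝ) (p : (Branches T × ℕ × Bool) × ℕ),
      (l.foldl (fun p v => (auxStep C G f r pA pD p.2 v p.1, p.2 + 1)) p).2
        = p.2 + l.length := by
    intro l
    induction l with
    | nil => simp
    | cons a l ih => intro p; simp only [List.foldl_cons, ih, List.length_cons]; omega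
  unfold auxState
  rw [initSeg_succ, List.foldl_concat]
  congr 1
  rw [key]
  simp [initSeg_length]

end PlayerIAux

section MainAux
variable {A : Type*} [TopologicalSpace A] [DiscreteTopology A] {T : Set (List A)}

lemma aux_main (C : Set (Branches T)) (G : ℕ → Set (Branches T)) (f : Branches T → ℝ)
    (r : ℝ) (pA : ℕ → Branches T → ℕ → Branches T) (pD : Branches T → ℕ → Branches T)
    (y0 : Branches T) (hy0 : y0 ∈ C) (hCclosed : IsClosed C)
    (hcov : ∀ z, z ∈ C → r ≤ f z → ∃ n, z ∈ G n)
    (hGclosed : ∀ n, IsClosed (G n))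
    (hpA : ∀ n (y : Branches T) (t : ℕ), y ∈ C →
      pA n y t ∈ C ∧ initSeg (pA n y t).val t = initSeg y.val t ∧ pA n y t ∉ G n)
    (hpD : ∀ (y : Branches T) (t : ℕ), y ∈ C →
      pD y t ∈ C ∧ initSeg (pD y t).val t = initSeg y.val t ∧ r ≤ f (pD y t))
    (v : ℕ → ℝ) :
    ∃ h : ∀ n : ℕ,
        initSeg (playI (fun l => (auxState C G f r pA pD y0 l).1.val l.length) v) n ∈ T,
      (f ⟨playI (fun l => (auxState C G f r pA pD y0 l).1.val l.length) v, h⟩ : EReal) ≠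
        Filter.limsup (fun t : ℕ => ((v t : ℝ) : EReal)) Filter.atTop := by
  classical
  set Sv : ℕ → Branches T × ℕ × Bool :=
    fun t => auxState C G f r pA pD y0 (initSeg v t) with hSvdef
  have hS0 : Sv 0 = (y0, 0, false) := auxState_nil C G f r pA pD y0 v
  have hrec : ∀ t, Sv (t + 1) = auxStep C G f r pA pD t (v t) (Sv t) :=
    fun t => auxState_succ C G f r pA pD y0 v t
  have hspec : ∀ t,
      ((Sv t).2.2 = true ∧
        (∀ z : Branches T, z ∈ C →
          initSeg z.val (t+1) = initSeg (Sv t).1.val (t+1) → z ∉ G (Sv t).2.1) ∧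
        Sv (t+1) = ((Sv t).1, (Sv t).2.1 + 1, false)) ∨
      ((Sv t).2.2 = true ∧
        ¬ (∀ z : Branches T, z ∈ C →
          initSeg z.val (t+1) = initSeg (Sv t).1.val (t+1) → z ∉ G (Sv t).2.1) ∧
        Sv (t+1) = Sv t) ∨
      ((Sv t).2.2 = false ∧ r - 1/(((Sv t).2.1 : ℝ)+1) < v t ∧
        Sv (t+1) = (pA (Sv t).2.1 (Sv t).1 (t+1), (Sv t).2.1, true)) ∨
      ((Sv t).2.2 = false ∧ ¬ (r - 1/(((Sv t).2.1 : ℝ)+1) < v t) ∧ r ≤ f (Sv t).1 ∧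
        Sv (t+1) = Sv t) ∨
      ((Sv t).2.2 = false ∧ ¬ (r - 1/(((Sv t).2.1 : ℝ)+1) < v t) ∧ ¬ r ≤ f (Sv t).1 ∧
        Sv (t+1) = (pD (Sv t).1 (t+1), (Sv t).2.1, false)) := by
    intro t
    rw [hrec t]
    exact auxStep_spec C G f r pA pD t (v t) (Sv t)
  -- invariants
  have hInv : ∀ t, (Sv t).1 ∈ C ∧
      (∀ i < (Sv t).2.1, ∀ z : Branches T, z ∈ C →
        initSeg z.val t = initSeg (Sv t).1.val t → z ∉ G i) ∧
      ((Sv t).2.2 = true → ∀ i ≤ (Sv t).2.1, (Sv t).1 ∉ G i) := by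
    intro t
    induction t with
    | zero =>
      rw [hS0]
      exact ⟨hy0, fun i hi => by simp at hi, fun h => by simp at h⟩
    | succ t ih =>
      obtain ⟨ihC, ihAvoid, ihPend⟩ := ih
      rcases hspec t with ⟨hp, hcond, heq⟩ | ⟨hp, hcond, heq⟩ | ⟨hp, hv, heq⟩ |
        ⟨hp, hv, hf, heq⟩ | ⟨hp, hv, hf, heq⟩
      · rw [heq]
        refine ⟨ihC, ?_, ?_⟩
        · intro i hi z hz hseg
          simp only at hseg hi
          rcases Nat.lt_succ_iff_lt_or_eq.mp hi with hi' | hi'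
          · exact ihAvoid i hi' z hz (initSeg_agree_mono (Nat.le_succ t) hseg)
          · subst hi'; exact hcond z hz hseg
        · simp
      · rw [heq]
        refine ⟨ihC, ?_, ihPend⟩
        intro i hi z hz hseg
        exact ihAvoid i hi z hz (initSeg_agree_mono (Nat.le_succ t) hseg)
      · obtain ⟨hAC, hAseg, hAG⟩ := hpA (Sv t).2.1 (Sv t).1 (t+1) ihC
        rw [heq]
        refine ⟨hAC, ?_, ?_⟩
        · intro i hi z hz hseg
          simp only at hseg hi
          exact ihAvoid i hi z hz
            (initSeg_agree_mono (Nat.le_succ t) (hseg.trans hAseg))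
        · intro _ i hi
          simp only at hi ⊢
          rcases Nat.lt_or_ge i (Sv t).2.1 with hi' | hi'
          · exact ihAvoid i hi' _ hAC (initSeg_agree_mono (Nat.le_succ t) hAseg)
          · have : i = (Sv t).2.1 := le_antisymm hi hi'
            subst this; exact hAG
      · rw [heq]
        refine ⟨ihC, ?_, ihPend⟩
        intro i hi z hz hseg
        exact ihAvoid i hi z hz (initSeg_agree_mono (Nat.le_succ t) hseg)
      · obtain ⟨hDC, hDseg, hDf⟩ := hpD (Sv t).1 (t+1) ihC
        rw [heq]
        refine ⟨hDC, ?_, ?_⟩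
        · intro i hi z hz hseg
          simp only at hseg hi
          exact ihAvoid i hi z hz
            (initSeg_agree_mono (Nat.le_succ t) (hseg.trans hDseg))
        · simp
  -- agreement of successive states
  have hagree : ∀ t, initSeg (Sv (t+1)).1.val (t+1) = initSeg (Sv t).1.val (t+1) := by
    intro t
    rcases hspec t with ⟨hp, hcond, heq⟩ | ⟨hp, hcond, heq⟩ | ⟨hp, hv, heq⟩ |
      ⟨hp, hv, hf, heq⟩ | ⟨hp, hv, hf, heq⟩
    · rw [heq]
    · rw [heq]
    · rw [heq]; exact (hpA (Sv t).2.1 (Sv t).1 (t+1) (hInv t).1).2.1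
    · rw [heq]
    · rw [heq]; exact (hpD (Sv t).1 (t+1) (hInv t).1).2.1
  have h_pt : ∀ t n, t ≤ n → initSeg (Sv n).1.val t = initSeg (Sv t).1.val t := by
    intro t n
    induction n with
    | zero => intro h; interval_cases t; rfl
    | succ n ihn =>
      intro h
      rcases Nat.lt_succ_iff_lt_or_eq.mp (Nat.lt_succ_of_le h) with h' | h'
      · have h1 : initSeg (Sv (n+1)).1.val t = initSeg (Sv n).1.val t :=
          initSeg_agree_mono (by omega) (hagree n)
        exact h1.trans (ihn (by omega))
      · subst h'; rfl
  set x : ℕ → A := playI (fun l => (auxState C G f r pA pD y0 l).1.val l.length) v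
    with hxdef
  have hx_t : ∀ t, x t = (Sv t).1.val t := by
    intro t
    show (auxState C G f r pA pD y0 (initSeg v t)).1.val (initSeg v t).length
      = (Sv t).1.val t
    rw [initSeg_length]
  have h_x : ∀ t, initSeg x t = initSeg (Sv t).1.val t := by
    intro t
    rw [initSeg_eq_iff]
    intro i hi
    have h2 : (Sv (i+1)).1.val i = (Sv i).1.val i :=
      initSeg_eq_iff.mp (hagree i) i (Nat.lt_succ_self i)
    have h3 : (Sv t).1.val i = (Sv (i+1)).1.val i :=
      initSeg_eq_iff.mp (h_pt (i+1) t hi) i (Nat.lt_succ_self i)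
    rw [hx_t i, h3, h2]
  have hleg : ∀ n : ℕ, initSeg x n ∈ T := fun n => (h_x n) ▸ (Sv n).1.2 n
  refine ⟨hleg, ?_⟩
  set X : Branches T := ⟨x, hleg⟩ with hXdef
  have hXC : X ∈ C := by
    have hcl : X ∈ closure C := by
      rw [mem_closure_iff]
      intro V hV hXV
      obtain ⟨m, hm⟩ := nhds_cylinder hV hXV
      exact ⟨(Sv m).1, hm _ (h_x m).symm, (hInv m).1⟩
    rwa [hCclosed.closure_eq] at hcl
  -- step behaviour of the counter
  have hKstep : ∀ t, Sv (t+1) = Sv t ∨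
      ((Sv t).2.2 = false ∧ (Sv (t+1)).2.1 = (Sv t).2.1) ∨
      ((Sv t).2.2 = true ∧ (Sv (t+1)).2.2 = false ∧ (Sv (t+1)).1 = (Sv t).1 ∧
        (Sv (t+1)).2.1 = (Sv t).2.1 + 1) := by
    intro t
    rcases hspec t with ⟨hp, hcond, heq⟩ | ⟨hp, hcond, heq⟩ | ⟨hp, hv, heq⟩ |
      ⟨hp, hv, hf, heq⟩ | ⟨hp, hv, hf, heq⟩
    · exact Or.inr (Or.inr ⟨hp, by rw [heq], by rw [heq], by rw [heq]⟩)
    · exact Or.inl heq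
    · exact Or.inr (Or.inl ⟨hp, by rw [heq]⟩)
    · exact Or.inl heq
    · exact Or.inr (Or.inl ⟨hp, by rw [heq]⟩)
  have hKmono : ∀ s t, s ≤ t → (Sv s).2.1 ≤ (Sv t).2.1 := by
    intro s t
    induction t with
    | zero => intro h; interval_cases s; rfl
    | succ t iht =>
      intro h
      rcases Nat.lt_succ_iff_lt_or_eq.mp (Nat.lt_succ_of_le h) with h' | h'
      · have h1 := iht (by omega)
        rcases hKstep t with he | ⟨_, he⟩ | ⟨_, _, _, he⟩ <;> rw [he] <;> omega
      · subst h'; rfl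
  -- structure of pending intervals
  have hpendStart : ∀ t, (Sv t).2.2 = true →
      ∃ s < t, (Sv s).2.2 = false ∧ (∀ u, s < u → u ≤ t → (Sv u).2.2 = true) ∧
        (Sv s).2.1 = (Sv t).2.1 ∧ r - 1/(((Sv s).2.1 : ℝ)+1) < v s := by
    intro t
    induction t with
    | zero => intro h; rw [hS0] at h; simp at h
    | succ t iht =>
      intro h
      rcases hspec t with ⟨hp, hcond, heq⟩ | ⟨hp, hcond, heq⟩ | ⟨hp, hv, heq⟩ |
        ⟨hp, hv, hf, heq⟩ | ⟨hp, hv, hf, heq⟩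
      · rw [heq] at h; simp at h
      · obtain ⟨s, hs1, hs2, hs3, hs4, hs5⟩ := iht hp
        refine ⟨s, by omega, hs2, ?_, by rw [heq]; exact hs4, hs5⟩
        intro u hu1 hu2
        rcases Nat.lt_succ_iff_lt_or_eq.mp (Nat.lt_succ_of_le hu2) with h' | h'
        · exact hs3 u hu1 (by omega)
        · subst h'; exact h
      · refine ⟨t, Nat.lt_succ_self t, hp, ?_, by rw [heq], hv⟩
        intro u hu1 hu2
        have : u = t + 1 := by omega
        subst this; exact h
      · rw [heq] at h; exact absurd h (by rw [hp]; simp)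
      · rw [heq] at h; simp at h
  by_cases hub : ∀ m, ∃ t, m ≤ (Sv t).2.1
  · -- Case A : the counter is unbounded
    have hXnotG : ∀ n, X ∉ G n := by
      intro n
      obtain ⟨t, ht⟩ := hub (n+1)
      exact (hInv t).2.1 n (by omega) X hXC (h_x t)
    have hfX : f X < r := by
      by_contra hcon
      push_neg at hcon
      obtain ⟨n, hn⟩ := hcov X hXC hcon
      exact hXnotG n hn
    obtain ⟨m, hm⟩ := exists_nat_one_div_lt (show (0:ℝ) < r - f X by linarith)
    have hIncIO : ∀ N, ∃ t, N ≤ t ∧ (Sv (t+1)).2.1 = (Sv t).2.1 + 1 := by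
      intro N
      by_contra hcon
      push_neg at hcon
      have hconst : ∀ t, N ≤ t → (Sv t).2.1 = (Sv N).2.1 := by
        intro t
        induction t with
        | zero => intro h; interval_cases N; rfl
        | succ t iht =>
          intro h
          rcases Nat.lt_succ_iff_lt_or_eq.mp (Nat.lt_succ_of_le h) with h' | h'
          · have h1 := iht (by omega)
            have h2 := hcon t (by omega)
            rcases hKstep t with he | ⟨_, he⟩ | ⟨_, _, _, he⟩
            · rw [he]; exact h1
            · rw [he]; exact h1
            · exact absurd he h2
          · subst h'; rfl
      obtain ⟨t, ht⟩ := hub ((Sv N).2.1 + 1)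
      rcases Nat.le_total t N with h' | h'
      · have := hKmono t N h'; omega
      · have := hconst t h'; omega
    have hfreq : ∀ N, ∃ s, N ≤ s ∧ r - 1/((m:ℝ)+1) ≤ v s := by
      intro N
      obtain ⟨t1, ht1⟩ := hub m
      obtain ⟨ta, hta, htainc⟩ := hIncIO (max N t1)
      have hPa : (Sv (ta+1)).2.2 = false := by
        rcases hKstep ta with he | ⟨_, he⟩ | ⟨_, he, _, _⟩
        · rw [he] at htainc; omega
        · omega
        · exact he
      obtain ⟨tb, htb, htbinc⟩ := hIncIO (ta+1)
      have hPb : (Sv tb).2.2 = true := by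
        rcases hKstep tb with he | ⟨_, he⟩ | ⟨he, _, _, _⟩
        · rw [he] at htbinc; omega
        · omega
        · exact he
      obtain ⟨s, hs1, hs2, hs3, hs4, hs5⟩ := hpendStart tb hPb
      have hs6 : ta + 1 ≤ s := by
        by_contra hcon
        push_neg at hcon
        have := hs3 (ta+1) (by omega) (by omega)
        rw [hPa] at this; simp at this
      have hKs : m ≤ (Sv s).2.1 := by
        have h1 : (Sv t1).2.1 ≤ (Sv tb).2.1 := hKmono t1 tb (by omega)
        omega
      refine ⟨s, by omega, ?_⟩
      have hdiv : 1/(((Sv s).2.1 : ℝ)+1) ≤ 1/((m:ℝ)+1) := by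
        apply one_div_le_one_div_of_le
        · positivity
        · have : (m:ℝ) ≤ ((Sv s).2.1 : ℝ) := by exact_mod_cast hKs
          linarith
      linarith
    have hlims : ((r - 1/((m:ℝ)+1) : ℝ) : EReal) ≤
        Filter.limsup (fun t : ℕ => ((v t : ℝ) : EReal)) Filter.atTop := by
      apply le_limsup_of_frequently_le
      · rw [Filter.frequently_atTop]
        intro N
        obtain ⟨s, hs1, hs2⟩ := hfreq N
        exact ⟨s, hs1, by exact_mod_cast hs2⟩
      · exact ⟨⊤, Filter.eventually_map.mpr (Filter.Eventually.of_forall fun _ => le_top)⟩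
    have hflt : (f X : EReal) < ((r - 1/((m:ℝ)+1) : ℝ) : EReal) := by
      rw [EReal.coe_lt_coe_iff]
      linarith
    exact ne_of_lt (lt_of_lt_of_le hflt hlims)
  · -- Case B : the counter is eventually constant
    push_neg at hub
    obtain ⟨M, hM⟩ := hub
    have claim : ∀ m, (∀ t, (Sv t).2.1 < m) →
        ∃ t0, ∀ t, t0 ≤ t → (Sv t).2.1 = (Sv t0).2.1 := by
      intro m
      induction m with
      | zero => intro h; exact absurd (h 0) (by omega)
      | succ m ihm =>
        intro h
        by_cases hex : ∃ t1, m ≤ (Sv t1).2.1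
        · obtain ⟨t1, ht1⟩ := hex
          refine ⟨t1, fun t ht => ?_⟩
          have h1 := hKmono t1 t ht
          have h2 := h t
          have h3 := h t1
          omega
        · push_neg at hex
          exact ihm fun t => by have := hex t; omega
    obtain ⟨t0, ht0⟩ := claim M fun t => by have := hM t; omega
    have hnoinc : ∀ t, t0 ≤ t → (Sv (t+1)).2.1 = (Sv t).2.1 := by
      intro t ht
      rw [ht0 (t+1) (by omega), ht0 t ht]
    have hfreezeStep : ∀ t, t0 ≤ t → (Sv t).2.2 = true → Sv (t+1) = Sv t := by
      intro t ht hp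
      rcases hspec t with ⟨_, _, heq⟩ | ⟨_, _, heq⟩ | ⟨hp', _, _⟩ |
        ⟨hp', _, _, _⟩ | ⟨hp', _, _, _⟩
      · have := hnoinc t ht; rw [heq] at this; simp at this
      · exact heq
      · rw [hp'] at hp; simp at hp
      · rw [hp'] at hp; simp at hp
      · rw [hp'] at hp; simp at hp
    have hnofreeze : ¬ ∃ t2, t0 ≤ t2 ∧ ∀ t, t2 ≤ t → (Sv t).2.2 = true := by
      rintro ⟨t2, ht2, hall⟩
      have hfr : ∀ t, t2 ≤ t → Sv t = Sv t2 := by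
        intro t ht
        induction t, ht using Nat.le_induction with
        | base => rfl
        | succ t ht iht =>
          rw [hfreezeStep t (by omega) (by rw [iht]; exact hall t2 le_rfl)]
          exact iht
      have hY : (Sv t2).1 ∉ G ((Sv t2).2.1) :=
        (hInv t2).2.2 (hall t2 le_rfl) _ le_rfl
      obtain ⟨m', hm'⟩ := nhds_cylinder (hGclosed ((Sv t2).2.1)).isOpen_compl hY
      set t := max t2 m' with htdef
      have hfrt : Sv t = Sv t2 := hfr t (le_max_left _ _)
      rcases hspec t with ⟨_, _, heq⟩ | ⟨_, hcond, _⟩ | ⟨hp', _, _⟩ |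
        ⟨hp', _, _, _⟩ | ⟨hp', _, _, _⟩
      · have := hnoinc t (le_trans ht2 (le_max_left t2 m')); rw [heq] at this; simp at this
      · apply hcond
        intro z hz hseg
        rw [hfrt] at hseg ⊢
        exact hm' z (initSeg_agree_mono (le_trans (le_max_right t2 m') (Nat.le_succ _)) hseg)
      · rw [hfrt, hall t2 le_rfl] at hp'; simp at hp'
      · rw [hfrt, hall t2 le_rfl] at hp'; simp at hp'
      · rw [hfrt, hall t2 le_rfl] at hp'; simp at hp'
    have hfalse : ∃ t1, t0 ≤ t1 ∧ (Sv t1).2.2 = false := by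
      by_contra hcon
      push_neg at hcon
      exact hnofreeze ⟨t0, le_rfl, fun t ht =>
        Bool.not_eq_false _ |>.mp (hcon t ht)⟩
    obtain ⟨t1, ht1, hP1⟩ := hfalse
    have hPfalse : ∀ t, t1 ≤ t → (Sv t).2.2 = false := by
      intro t ht
      induction t, ht using Nat.le_induction with
      | base => exact hP1
      | succ t ht iht =>
        rcases hspec t with ⟨hp', _, _⟩ | ⟨hp', _, _⟩ | ⟨_, _, heq⟩ |
          ⟨_, _, _, heq⟩ | ⟨_, _, _, heq⟩
        · rw [iht] at hp'; simp at hp'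
        · rw [iht] at hp'; simp at hp'
        · -- a high move would start a pending phase that never ends
          exfalso
          apply hnofreeze
          refine ⟨t+1, by omega, fun u hu => ?_⟩
          induction u, hu using Nat.le_induction with
          | base => rw [heq]
          | succ u hu ihu =>
            rw [hfreezeStep u (by omega) ihu]
            exact ihu
        · rw [heq]; exact iht
        · rw [heq]
    have hlowv : ∀ t, t1 ≤ t → v t ≤ r - 1/(((Sv t).2.1 : ℝ)+1) := by
      intro t ht
      rcases hspec t with ⟨hp', _, _⟩ | ⟨hp', _, _⟩ | ⟨_, hv, heq⟩ |
        ⟨_, hv, _, _⟩ | ⟨_, hv, _, _⟩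
      · rw [hPfalse t ht] at hp'; simp at hp'
      · rw [hPfalse t ht] at hp'; simp at hp'
      · have := hPfalse (t+1) (by omega); rw [heq] at this; simp at this
      · linarith [not_lt.mp hv]
      · linarith [not_lt.mp hv]
    have hfY : ∀ t, t1 ≤ t → r ≤ f ((Sv (t+1)).1) := by
      intro t ht
      rcases hspec t with ⟨hp', _, _⟩ | ⟨hp', _, _⟩ | ⟨_, hv, _⟩ |
        ⟨_, _, hf, heq⟩ | ⟨_, _, _, heq⟩
      · rw [hPfalse t ht] at hp'; simp at hp'
      · rw [hPfalse t ht] at hp'; simp at hp'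
      · have := hlowv t ht; linarith
      · rw [heq]; exact hf
      · rw [heq]; exact (hpD (Sv t).1 (t+1) (hInv t).1).2.2
    have hfrozen2 : ∀ t, t1 + 1 ≤ t → Sv t = Sv (t1+1) := by
      intro t ht
      induction t, ht using Nat.le_induction with
      | base => rfl
      | succ t ht iht =>
        have hstep : Sv (t+1) = Sv t := by
          rcases hspec t with ⟨hp', _, _⟩ | ⟨hp', _, _⟩ | ⟨_, hv, _⟩ |
            ⟨_, _, _, heq⟩ | ⟨_, _, hf, _⟩
          · rw [hPfalse t (by omega)] at hp'; simp at hp'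
          · rw [hPfalse t (by omega)] at hp'; simp at hp'
          · have := hlowv t (by omega); linarith
          · exact heq
          · exfalso
            obtain ⟨s, rfl⟩ : ∃ s, t = s + 1 := ⟨t - 1, by omega⟩
            exact hf (hfY s (by omega))
        rw [hstep]; exact iht
    have hfXr : r ≤ f X := by
      have hXd : X = (Sv (t1+1)).1 := by
        rw [hXdef]
        apply Subtype.ext
        funext i
        have h1 : x i = (Sv (max (i+1) (t1+1))).1.val i :=
          initSeg_eq_iff.mp (h_x (max (i+1) (t1+1))) i (by omega)
        have h2 : Sv (max (i+1) (t1+1)) = Sv (t1+1) :=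
          hfrozen2 _ (le_max_right _ _)
        rw [h2] at h1
        exact h1
      rw [hXd]
      exact hfY t1 le_rfl
    have hev : ∀ᶠ t in atTop, (fun t : ℕ => ((v t : ℝ) : EReal)) t ≤
        ((r - 1/(((Sv t1).2.1 : ℝ)+1) : ℝ) : EReal) := by
      rw [Filter.eventually_atTop]
      refine ⟨t1, fun t ht => ?_⟩
      have h1 := hlowv t ht
      have h2 : (Sv t).2.1 = (Sv t1).2.1 := by
        rw [ht0 t (by omega), ht0 t1 (by omega)]
      rw [h2] at h1
      exact EReal.coe_le_coe_iff.mpr h1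
    have hlim : Filter.limsup (fun t : ℕ => ((v t : ℝ) : EReal)) Filter.atTop ≤
        ((r - 1/(((Sv t1).2.1 : ℝ)+1) : ℝ) : EReal) :=
      limsup_le_of_le (by isBoundedDefault) hev
    have hfin : ((r - 1/(((Sv t1).2.1 : ℝ)+1) : ℝ) : EReal) < (f X : EReal) := by
      rw [EReal.coe_lt_coe_iff]
      have hpos : (0:ℝ) < 1/(((Sv t1).2.1 : ℝ)+1) := by positivity
      linarith
    exact (ne_of_lt (lt_of_le_of_lt hlim hfin)).symm

end MainAux

/-- If there are `r ∈ ℝ` and a Cantor set `C ⊆ X` such that, in the subspace topology of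
`C`, the set `C ∩ {f ≥ r}` is meagre and dense, then Player I has a winning strategy in
`Γ(f)`. -/
theorem playerI_wins_of_meagre_dense
    {A : Type*} [Countable A] [Nonempty A] [TopologicalSpace A] [DiscreteTopology A]
    {T : Set (List A)} (hT : IsPrunedTree T) (f : Branches T → ℝ)
    (r : ℝ) (C : Set (Branches T)) (hC : IsCantorSet C)
    (hmeagre : IsMeagre (Subtype.val ⁻¹' {x | r ≤ f x} : Set ↥C))
    (hdense : Dense (Subtype.val ⁻¹' {x | r ≤ f x} : Set ↥C)) :
    PlayerIWinsGamma f := by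
  classical
  obtain ⟨e⟩ := hC
  haveI : CompactSpace ↥C := e.symm.compactSpace
  have hCcomp : IsCompact C := isCompact_iff_compactSpace.mpr ‹_›
  have hCclosed : IsClosed C := hCcomp.isClosed
  have hCne : C.Nonempty := by
    have h : Nonempty ↥C := ⟨e.symm fun _ => true⟩
    exact Set.nonempty_coe_sort.mp h
  obtain ⟨S, hSnwd, hScnt, hScov⟩ := isMeagre_iff_countable_union_isNowhereDense.mp hmeagre
  obtain ⟨g, hg⟩ := (hScnt.insert ∅).exists_eq_range (Set.insert_nonempty _ _)
  set G : ℕ → Set (Branches T) := fun n => Subtype.val '' closure (g n) with hGdef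
  have hGclosed : ∀ n, IsClosed (G n) := fun n =>
    hCclosed.isClosedEmbedding_subtypeVal.isClosedMap _ isClosed_closure
  have hGnwd : ∀ n, interior (closure (g n)) = (∅ : Set ↥C) := by
    intro n
    have hmem : g n ∈ insert ∅ S := by rw [hg]; exact Set.mem_range_self n
    rcases hmem with h | h
    · rw [h]; simp
    · have h2 := (hSnwd _ h).closure
      rwa [IsNowhereDense, closure_closure] at h2
  have hcov : ∀ z, z ∈ C → r ≤ f z → ∃ n, z ∈ G n := by
    intro z hz hr
    have h1 : (⟨z, hz⟩ : ↥C) ∈ ⋃₀ S := hScov hr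
    obtain ⟨s, hsS, hzs⟩ := h1
    have h2 : s ∈ Set.range g := by rw [← hg]; exact Set.mem_insert_of_mem _ hsS
    obtain ⟨n, rfl⟩ := h2
    exact ⟨n, ⟨⟨z, hz⟩, subset_closure hzs, rfl⟩⟩
  have E1 : ∀ (y : Branches T) (t : ℕ), ∃ z : Branches T,
      y ∈ C → z ∈ C ∧ initSeg z.val t = initSeg y.val t ∧ r ≤ f z := by
    intro y t
    by_cases hy : y ∈ C
    · have hU : IsOpen (Subtype.val ⁻¹' {z : Branches T | initSeg z.val t = initSeg y.val t}
          : Set ↥C) := (isOpen_initSegEq y.val t).preimage continuous_subtype_val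
      have hUne : (Subtype.val ⁻¹' {z : Branches T | initSeg z.val t = initSeg y.val t}
          : Set ↥C).Nonempty := ⟨⟨y, hy⟩, rfl⟩
      obtain ⟨u, huD, huU⟩ := hdense.exists_mem_open hU hUne
      exact ⟨u.1, fun _ => ⟨u.2, huU, huD⟩⟩
    · exact ⟨y, fun h => absurd h hy⟩
  have E2 : ∀ (n : ℕ) (y : Branches T) (t : ℕ), ∃ z : Branches T,
      y ∈ C → z ∈ C ∧ initSeg z.val t = initSeg y.val t ∧ z ∉ G n := by
    intro n y t
    by_cases hy : y ∈ C
    · set U : Set ↥C :=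
        Subtype.val ⁻¹' {z : Branches T | initSeg z.val t = initSeg y.val t} with hUdef
      have hU : IsOpen U := (isOpen_initSegEq y.val t).preimage continuous_subtype_val
      have hUne : U.Nonempty := ⟨⟨y, hy⟩, rfl⟩
      have hnotsub : ¬ U ⊆ closure (g n) := by
        intro hsub
        have h1 : U ⊆ interior (closure (g n)) := hU.subset_interior_iff.mpr hsub
        rw [hGnwd n] at h1
        exact hUne.ne_empty (Set.subset_empty_iff.mp h1)
      obtain ⟨u, huU, hunot⟩ := Set.not_subset.mp hnotsub
      refine ⟨u.1, fun _ => ⟨u.2, huU, ?_⟩⟩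
      rintro ⟨w, hw, hwu⟩
      exact hunot (by rwa [Subtype.val_injective hwu] at hw)
    · exact ⟨y, fun h => absurd h hy⟩
  choose pD hpD using E1
  choose pA hpA using E2
  obtain ⟨y0, hy0⟩ := hCne
  refine ⟨fun l => (auxState C G f r pA pD y0 l).1.val l.length, fun v => ?_⟩
  exact aux_main C G f r pA pD y0 hy0 hCclosed hcov hGclosed
    (fun n y t hy => hpA n y t hy) (fun y t hy => hpD y t hy) v
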